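/- Let Σ be a strictly totally ordered finite alphabet with more than two letters and let μ be a non-binary, injective, alphabetically ordered weight measure over Σ with values in a linearly ordered cancellative commutative monoid A. The following are equivalent: (1) μ is gapfree; (2) μ has no gap over any word of the form c·a·c·b where a < b < c are letters of Σ; (3) μ is equivalent to the standard weight measure μ_Σ. -/

import Mathlib

/-- The weight of a word: the product of the weights of its letters. -/
def weight {α A : Type*} [CommMonoid A] [LinearOrder A] [IsOrderedCancelMonoid A] (μ : α → A) (w : List α) : A :=
  (w.map μ).prod

/-- The factor-weight function: `factorWeight μ w i` is the maximum weight of a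
length-`i` factor (contiguous subword) of `w`. -/
def factorWeight {α A : Type*} [CommMonoid A] [LinearOrder A] [IsOrderedCancelMonoid A] (μ : α → A)
    (w : List α) (i : ℕ) : A :=
  ((List.range (w.length + 1 - i)).map fun j => weight μ ((w.drop j).take i)).foldr max 1

/-- A word is `μ`-prefix normal if its factor-weight function agrees with its
prefix-weight function. -/
def PrefixNormal {α A : Type*} [CommMonoid A] [LinearOrder A] [IsOrderedCancelMonoid A] (μ : α → A)
    (w : List α) : Prop :=
  ∀ i ≤ w.length, factorWeight μ w i = weight μ (w.take i)

/-- A weight measure is gapfree if for every word `w` and every `1 ≤ i ≤ |w|` there is a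
letter `a` with `f_{w,μ}(i) = f_{w,μ}(i-1) * μ a`. -/
def Gapfree {α A : Type*} [CommMonoid A] [LinearOrder A] [IsOrderedCancelMonoid A] (μ : α → A) : Prop :=
  ∀ w : List α, ∀ i, 1 ≤ i → i ≤ w.length →
    ∃ a : α, factorWeight μ w i = factorWeight μ w (i - 1) * μ a

/-- `pnClass μ w` is the set `P_μ(w)` of words that are factor-weight equivalent to `w`
and `μ`-prefix normal. -/
def pnClass {α A : Type*} [CommMonoid A] [LinearOrder A] [IsOrderedCancelMonoid A] (μ : α → A)
    (w : List α) : Set (List α) :=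
  {v | (∀ i, factorWeight μ v i = factorWeight μ w i) ∧ PrefixNormal μ v}

/-- The additive weight of a word with respect to weights in `(ℕ,+)`. -/
def weightAdd {α : Type*} (ν : α → ℕ) (w : List α) : ℕ := (w.map ν).sum

/-- The standard weight measure of the strictly totally ordered alphabet
`Σ = {a_1 < … < a_n}` (modelled as `Fin n`): `μ_Σ(a_i) = i`, with values in `(ℕ,+)`. -/
def standardWeightMeasure (n : ℕ) : Fin n → ℕ := fun a => (a : ℕ) + 1

section slope
variable {n : ℕ} {A : Type*} [CommMonoid A] [LinearOrder A] [IsOrderedCancelMonoid A] {μ : Fin n → A}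

lemma pow_lt_pow_left'' {x y : A} (hxy : x < y) {d : ℕ} (hd : 1 ≤ d) : x ^ d < y ^ d := by
  induction d with
  | zero => omega
  | succ k ih =>
    rcases Nat.eq_or_lt_of_le hd with h | h
    · simp [← h] at *; simpa using hxy
    · have := ih (by omega)
      calc x ^ (k+1) = x ^ k * x := pow_succ x k
        _ < y ^ k * y := mul_lt_mul_of_lt_of_lt this hxy
        _ = y ^ (k+1) := (pow_succ y k).symm

lemma slopeC (hsm : StrictMono μ)
    (key : ∀ a b c : Fin n, a < b → b < c → ∃ x, μ b * μ x = μ a * μ c) :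
    ∀ (d i : ℕ) (h : i + d + 1 < n),
      μ ⟨i, by omega⟩ * μ ⟨i + d + 1, h⟩ = μ ⟨i + 1, by omega⟩ * μ ⟨i + d, by omega⟩ := by
  intro d
  induction d with
  | zero => intro i h; exact mul_comm _ _
  | succ d ih =>
    intro i h
    obtain ⟨x, hx⟩ := key ⟨i, by omega⟩ ⟨i + 1, by omega⟩ ⟨i + d + 2, by omega⟩
      (by simp [Fin.lt_def]) (by simp [Fin.lt_def])
    have hxval : (x : ℕ) = i + d + 1 := by
      by_contra hne
      rcases lt_or_gt_of_ne hne with hlt | hgt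
      · -- x ≤ i + d
        have h1 : μ x ≤ μ ⟨i + d, by omega⟩ := hsm.monotone (by simp [Fin.le_def]; omega)
        have h2 : μ ⟨i + 1, by omega⟩ * μ x ≤ μ ⟨i, by omega⟩ * μ ⟨i + d + 1, by omega⟩ := by
          calc μ ⟨i + 1, by omega⟩ * μ x ≤ μ ⟨i + 1, by omega⟩ * μ ⟨i + d, by omega⟩ :=
              mul_le_mul_right h1 _
            _ = μ ⟨i, by omega⟩ * μ ⟨i + d + 1, by omega⟩ := (ih i (by omega)).symm
        have h3 : μ ⟨i, by omega⟩ * μ ⟨i + d + 1, by omega⟩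
            < μ ⟨i, by omega⟩ * μ ⟨i + d + 2, by omega⟩ :=
          mul_lt_mul_right (hsm (by simp [Fin.lt_def])) _
        exact absurd hx (by exact ne_of_lt (lt_of_le_of_lt h2 h3))
      · -- x ≥ i + d + 2
        have h1 : μ ⟨i + d + 2, by omega⟩ ≤ μ x := hsm.monotone (by simp [Fin.le_def]; omega)
        have h2 : μ ⟨i, by omega⟩ * μ ⟨i + d + 2, by omega⟩
            < μ ⟨i + 1, by omega⟩ * μ x := by
          calc μ ⟨i, by omega⟩ * μ ⟨i + d + 2, by omega⟩
              < μ ⟨i + 1, by omega⟩ * μ ⟨i + d + 2, by omega⟩ :=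
              mul_lt_mul_left (hsm (by simp [Fin.lt_def])) _
            _ ≤ μ ⟨i + 1, by omega⟩ * μ x := mul_le_mul_right h1 _
        exact absurd hx (ne_of_gt h2)
    have : x = ⟨i + d + 1, by omega⟩ := by
      apply Fin.ext; exact hxval
    rw [this] at hx
    exact hx.symm

end slope

section geom
variable {n : ℕ} {A : Type*} [CommMonoid A] [LinearOrder A] [IsOrderedCancelMonoid A] {μ : Fin n → A}

def svalL {n : ℕ} (v : List (Fin n)) : ℕ := (v.map Fin.val).sum

lemma geom (hsm : StrictMono μ)
    (key : ∀ a b c : Fin n, a < b → b < c → ∃ x, μ b * μ x = μ a * μ c)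
    (hn : 1 < n) :
    ∀ (k : ℕ) (h : k < n),
      μ ⟨k, h⟩ * (μ ⟨0, by omega⟩) ^ k = μ ⟨0, by omega⟩ * (μ ⟨1, hn⟩) ^ k := by
  intro k
  induction k with
  | zero => intro h; simp
  | succ k ih =>
    intro h
    have hk : k < n := by omega
    have step : μ ⟨k + 1, h⟩ * μ ⟨0, by omega⟩ = μ ⟨k, hk⟩ * μ ⟨1, hn⟩ := by
      rcases Nat.eq_zero_or_pos k with rfl | hkpos
      · exact mul_comm _ _
      · have := slopeC hsm key k 0 (by omega)
        simp only [Nat.zero_add] at this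
        rw [mul_comm (μ ⟨k+1, h⟩), this, mul_comm]
    calc μ ⟨k + 1, h⟩ * (μ ⟨0, by omega⟩) ^ (k + 1)
        = (μ ⟨k + 1, h⟩ * μ ⟨0, by omega⟩) * (μ ⟨0, by omega⟩) ^ k := by
          rw [pow_succ]; rw [mul_comm ((μ ⟨0, by omega⟩)^k), mul_assoc]
      _ = μ ⟨1, hn⟩ * (μ ⟨k, hk⟩ * (μ ⟨0, by omega⟩) ^ k) := by
          rw [step]; rw [mul_comm (μ ⟨k, hk⟩), mul_assoc]
      _ = μ ⟨1, hn⟩ * (μ ⟨0, by omega⟩ * (μ ⟨1, hn⟩) ^ k) := by rw [ih hk]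
      _ = μ ⟨0, by omega⟩ * (μ ⟨1, hn⟩) ^ (k + 1) := by
          rw [pow_succ]; rw [← mul_assoc, mul_comm (μ ⟨1, hn⟩), mul_assoc,
            mul_comm (μ ⟨1, hn⟩) ((μ ⟨1, hn⟩)^k)]

lemma weight_formula (hsm : StrictMono μ)
    (key : ∀ a b c : Fin n, a < b → b < c → ∃ x, μ b * μ x = μ a * μ c)
    (hn : 1 < n) (v : List (Fin n)) :
    weight μ v * (μ ⟨0, by omega⟩) ^ svalL v
      = (μ ⟨0, by omega⟩) ^ v.length * (μ ⟨1, hn⟩) ^ svalL v := by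
  induction v with
  | nil => simp [weight, svalL]
  | cons a t ih =>
    have ha : μ a * (μ ⟨0, by omega⟩) ^ (a : ℕ) = μ ⟨0, by omega⟩ * (μ ⟨1, hn⟩) ^ (a : ℕ) := by
      have := geom hsm key hn (a : ℕ) a.isLt
      simpa using this
    have hsv : svalL (a :: t) = (a : ℕ) + svalL t := by simp [svalL]
    have hw : weight μ (a :: t) = μ a * weight μ t := by simp [weight]
    rw [hsv, hw, pow_add, pow_add]
    calc μ a * weight μ t * ((μ ⟨0, by omega⟩) ^ (a:ℕ) * (μ ⟨0, by omega⟩) ^ svalL t)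
        = (μ a * (μ ⟨0, by omega⟩) ^ (a:ℕ)) * (weight μ t * (μ ⟨0, by omega⟩) ^ svalL t) := by
          rw [mul_assoc, mul_assoc]; rw [← mul_assoc (weight μ t), mul_comm (weight μ t),
            mul_assoc]
      _ = (μ ⟨0, by omega⟩ * (μ ⟨1, hn⟩) ^ (a:ℕ))
            * ((μ ⟨0, by omega⟩) ^ t.length * (μ ⟨1, hn⟩) ^ svalL t) := by rw [ha, ih]
      _ = (μ ⟨0, by omega⟩) ^ (a :: t).length * ((μ ⟨1, hn⟩) ^ (a:ℕ) * (μ ⟨1, hn⟩) ^ svalL t) := by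
          simp only [List.length_cons, pow_succ]
          ac_rfl
end geom

section cmp
variable {n : ℕ} {A : Type*} [CommMonoid A] [LinearOrder A] [IsOrderedCancelMonoid A] {μ : Fin n → A}

lemma pow_mix_lt {x y : A} (hxy : x < y) {p q : ℕ} (hpq : p < q) :
    y ^ p * x ^ q < y ^ q * x ^ p := by
  obtain ⟨d, rfl⟩ := Nat.exists_eq_add_of_lt hpq
  have h1 : x ^ (d + 1) < y ^ (d + 1) := pow_lt_pow_left'' hxy (by omega)
  calc y ^ p * x ^ (p + d + 1) = y ^ p * (x ^ p * x ^ (d + 1)) := by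
        rw [show p + d + 1 = p + (d + 1) by omega, pow_add]
    _ = (y ^ p * x ^ p) * x ^ (d + 1) := by ac_rfl
    _ < (y ^ p * x ^ p) * y ^ (d + 1) := mul_lt_mul_right h1 _
    _ = (y ^ p * y ^ (d + 1)) * x ^ p := by ac_rfl
    _ = y ^ (p + (d + 1)) * x ^ p := by rw [← pow_add]
    _ = y ^ (p + d + 1) * x ^ p := by rw [show p + (d + 1) = p + d + 1 by omega]

lemma pow_mix_lt_iff {x y : A} (hxy : x < y) {p q : ℕ} :
    y ^ p * x ^ q < y ^ q * x ^ p ↔ p < q := by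
  constructor
  · intro h
    by_contra hle
    rcases Nat.lt_or_ge q p with hlt | hge
    · exact absurd (pow_mix_lt hxy hlt) (not_lt.2 h.le)
    · have : p = q := by omega
      subst this; exact lt_irrefl _ h
  · exact pow_mix_lt hxy

lemma weightAdd_standard {n : ℕ} (v : List (Fin n)) :
    weightAdd (standardWeightMeasure n) v = svalL v + v.length := by
  induction v with
  | nil => simp [weightAdd, svalL]
  | cons a t ih => simp [weightAdd, svalL, standardWeightMeasure] at *; omega

lemma equiv_standard (hsm : StrictMono μ)
    (key : ∀ a b c : Fin n, a < b → b < c → ∃ x, μ b * μ x = μ a * μ c)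
    (hn : 1 < n) (v w : List (Fin n)) (hlen : v.length = w.length) :
    weight μ v < weight μ w ↔
      weightAdd (standardWeightMeasure n) v < weightAdd (standardWeightMeasure n) w := by
  set x := μ ⟨0, by omega⟩ with hx
  set y := μ ⟨1, hn⟩ with hy
  have hxy : x < y := hsm (by simp [Fin.lt_def])
  have hv := weight_formula hsm key hn v
  have hw := weight_formula hsm key hn w
  rw [weightAdd_standard, weightAdd_standard, hlen, Nat.add_lt_add_iff_right]
  constructor
  · intro h
    have h2 : weight μ v * (x ^ svalL v * x ^ svalL w)
        < weight μ w * (x ^ svalL w * x ^ svalL v) := by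
      rw [mul_comm (x ^ svalL w)]
      exact mul_lt_mul_left h _
    rw [← mul_assoc, ← mul_assoc, hv, hw] at h2
    have h3 : x ^ w.length * (y ^ svalL v * x ^ svalL w)
        < x ^ w.length * (y ^ svalL w * x ^ svalL v) := by
      rw [← hlen]
      calc x ^ v.length * (y ^ svalL v * x ^ svalL w)
          = x ^ v.length * y ^ svalL v * x ^ svalL w := by rw [mul_assoc]
        _ < x ^ w.length * y ^ svalL w * x ^ svalL v := h2
        _ = x ^ w.length * (y ^ svalL w * x ^ svalL v) := by rw [mul_assoc]
        _ = x ^ v.length * (y ^ svalL w * x ^ svalL v) := by rw [hlen]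
    have h4 := lt_of_mul_lt_mul_left' h3
    exact (pow_mix_lt_iff hxy).1 h4
  · intro h
    have h4 : y ^ svalL v * x ^ svalL w < y ^ svalL w * x ^ svalL v :=
      (pow_mix_lt_iff hxy).2 h
    have h3 : x ^ v.length * (y ^ svalL v * x ^ svalL w)
        < x ^ w.length * (y ^ svalL w * x ^ svalL v) := by
      rw [hlen]; exact mul_lt_mul_right h4 _
    have h2 : weight μ v * (x ^ svalL v * x ^ svalL w)
        < weight μ w * (x ^ svalL w * x ^ svalL v) := by
      rw [← mul_assoc, ← mul_assoc, hv, hw]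
      rw [mul_assoc, mul_assoc]; exact h3
    rw [mul_comm (x ^ svalL w) (x ^ svalL v)] at h2
    exact lt_of_mul_lt_mul_right' h2

end cmp

section extract
variable {n : ℕ} {A : Type*} [CommMonoid A] [LinearOrder A] [IsOrderedCancelMonoid A] {μ : Fin n → A}

lemma key_of_two (hsm : StrictMono μ) (hμ : ∀ a, 1 < μ a)
    (h2 : ∀ a b c : Fin n, a < b → b < c →
      ∀ i, 1 ≤ i → i ≤ 4 →
        ∃ x : Fin n, factorWeight μ [c, a, c, b] i
          = factorWeight μ [c, a, c, b] (i - 1) * μ x) :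
    ∀ a b c : Fin n, a < b → b < c → ∃ x, μ b * μ x = μ a * μ c := by
  intro a b c hab hbc
  obtain ⟨x, hx⟩ := h2 a b c hab hbc 3 (by norm_num) (by norm_num)
  have hab' : μ a < μ b := hsm hab
  have hbc' : μ b < μ c := hsm hbc
  have e2 : factorWeight μ [c, a, c, b] 2 = μ c * μ b := by
    simp [factorWeight, weight, List.range_succ]
    have g1 : μ c * μ b ⊔ 1 = μ c * μ b := sup_eq_left.2 (one_le_mul (hμ c).le (hμ b).le)
    have g2 : μ a * μ c ⊔ μ c * μ b = μ c * μ b := sup_eq_right.2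
      (by calc μ a * μ c = μ c * μ a := mul_comm _ _
            _ ≤ μ c * μ b := mul_le_mul_right hab'.le _)
    have g3 : μ c * μ a ⊔ μ c * μ b = μ c * μ b := sup_eq_right.2 (mul_le_mul_right hab'.le _)
    rw [g1, g2, g3]
  have e3 : factorWeight μ [c, a, c, b] 3 = μ c * (μ a * μ c) := by
    simp [factorWeight, weight, List.range_succ]
    refine ⟨?_, one_le_mul (hμ c).le (one_le_mul (hμ a).le (hμ c).le)⟩
    calc μ a * (μ c * μ b) ≤ μ a * (μ c * μ c) :=
          mul_le_mul_right (mul_le_mul_right hbc'.le _) _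
      _ = μ c * (μ a * μ c) := by ac_rfl
  rw [e3, e2] at hx
  have hx2 : μ c * (μ a * μ c) = μ c * (μ b * μ x) := by rw [hx, mul_assoc]
  exact ⟨x, (mul_left_cancel hx2).symm⟩

end extract

section gapfree
variable {n : ℕ} {A : Type*} [CommMonoid A] [LinearOrder A] [IsOrderedCancelMonoid A] {μ : Fin n → A}

lemma le_foldr_max {l : List A} {z : A} (hz : z ∈ l) : z ≤ l.foldr max 1 := by
  induction l with
  | nil => simp at hz
  | cons a t ih =>
    rcases List.mem_cons.1 hz with h | h
    · simp [h, le_max_iff]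
    · simp only [List.foldr_cons]
      exact le_trans (ih h) (le_max_right _ _)

lemma foldr_max_mem {l : List A} (hne : l ≠ []) (h1 : ∀ z ∈ l, 1 ≤ z) :
    l.foldr max 1 ∈ l := by
  induction l with
  | nil => simp at hne
  | cons a t ih =>
    rcases eq_or_ne t [] with rfl | ht
    · simp [max_eq_left (h1 a (by simp))]
    · have hm := ih ht (fun z hz => h1 z (List.mem_cons_of_mem _ hz))
      simp only [List.foldr_cons]
      rcases le_total (t.foldr max 1) a with h | h
      · simp [max_eq_left h]
      · simp [max_eq_right h, hm]

lemma one_le_weight (hμ : ∀ a : Fin n, 1 < μ a) (w : List (Fin n)) :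
    1 ≤ weight μ w := by
  induction w with
  | nil => simp [weight]
  | cons a t ih => simpa [weight] using one_le_mul (hμ a).le (by simpa [weight] using ih)

/-- the list of length-`i` factors of `w` -/
def facs {n : ℕ} (w : List (Fin n)) (i : ℕ) : List (List (Fin n)) :=
  (List.range (w.length + 1 - i)).map fun j => (w.drop j).take i

lemma factorWeight_eq_foldr (w : List (Fin n)) (i : ℕ) :
    factorWeight μ w i = ((facs w i).map (weight μ)).foldr max 1 := by
  simp only [factorWeight, facs, List.map_map]
  rfl

lemma length_of_mem_facs {w : List (Fin n)} {i : ℕ} (hi : i ≤ w.length)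
    {u : List (Fin n)} (hu : u ∈ facs w i) : u.length = i := by
  simp only [facs, List.mem_map, List.mem_range] at hu
  obtain ⟨j, hj, rfl⟩ := hu
  simp only [List.length_take, List.length_drop]
  omega

lemma exists_argmax (hμ : ∀ a : Fin n, 1 < μ a) {w : List (Fin n)} {i : ℕ}
    (hi : i ≤ w.length) :
    ∃ u ∈ facs w i, factorWeight μ w i = weight μ u ∧
      ∀ u' ∈ facs w i, weight μ u' ≤ weight μ u := by
  have hne : facs w i ≠ [] := by
    simp only [facs, ne_eq, List.map_eq_nil_iff, List.range_eq_nil]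
    omega
  have hne' : (facs w i).map (weight μ) ≠ [] := by simpa using hne
  have hmem := foldr_max_mem hne' (by
    intro z hz
    simp only [List.mem_map] at hz
    obtain ⟨u, _, rfl⟩ := hz
    exact one_le_weight hμ u)
  simp only [List.mem_map] at hmem
  obtain ⟨u, hu, hval⟩ := hmem
  refine ⟨u, hu, by rw [factorWeight_eq_foldr, hval], ?_⟩
  intro u' hu'
  rw [hval]
  exact le_foldr_max (List.mem_map_of_mem hu')

lemma take_mem_facs {w : List (Fin n)} {i : ℕ} (h1 : 1 ≤ i)
    {u : List (Fin n)} (hu : u ∈ facs w i) : u.take (i - 1) ∈ facs w (i - 1) := by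
  simp only [facs, List.mem_map, List.mem_range] at hu ⊢
  obtain ⟨j, hj, rfl⟩ := hu
  exact ⟨j, by omega, by rw [List.take_take]; congr 1; omega⟩

lemma exists_extension {w : List (Fin n)} {i : ℕ} (h1 : 1 ≤ i) (hi : i ≤ w.length)
    {v : List (Fin n)} (hv : v ∈ facs w (i - 1)) :
    ∃ v' ∈ facs w i, ∃ a : Fin n, v' = v ++ [a] ∨ v' = a :: v := by
  obtain ⟨k, rfl⟩ : ∃ k, i = k + 1 := ⟨i - 1, by omega⟩
  simp only [Nat.add_sub_cancel] at hv ⊢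
  simp only [facs, List.mem_map, List.mem_range] at hv
  obtain ⟨j, hj, rfl⟩ := hv
  by_cases hcase : j + (k + 1) ≤ w.length
  · refine ⟨(w.drop j).take (k + 1), ?_, ?_⟩
    · simp only [facs, List.mem_map, List.mem_range]
      exact ⟨j, by omega, rfl⟩
    · have hlen : k < (w.drop j).length := by
        simp only [List.length_drop]; omega
      refine ⟨(w.drop j)[k], Or.inl ?_⟩
      rw [List.take_succ, List.getElem?_eq_getElem hlen]
      simp
  · have hj1 : 1 ≤ j := by omega
    refine ⟨(w.drop (j - 1)).take (k + 1), ?_, ?_⟩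
    · simp only [facs, List.mem_map, List.mem_range]
      exact ⟨j - 1, by omega, rfl⟩
    · have hjlt : j - 1 < w.length := by omega
      refine ⟨w[j - 1], Or.inr ?_⟩
      have hdrop : w.drop (j - 1) = w[j - 1] :: w.drop j := by
        rw [List.drop_eq_getElem_cons hjlt, show j - 1 + 1 = j from by omega]
      rw [hdrop, List.take_cons (by omega : 0 < k + 1)]
      simp

lemma weightAdd_append {α : Type*} (ν : α → ℕ) (v w : List α) :
    weightAdd ν (v ++ w) = weightAdd ν v + weightAdd ν w := by simp [weightAdd]

lemma weight_append' (μ : Fin n → A) (v w : List (Fin n)) :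
    weight μ (v ++ w) = weight μ v * weight μ w := by simp [weight]

end gapfree

section main
variable {n : ℕ} {A : Type*} [CommMonoid A] [LinearOrder A] [IsOrderedCancelMonoid A] {μ : Fin n → A}

lemma gapfree_of_equiv (hμ : ∀ a : Fin n, 1 < μ a) (hn : 0 < n)
    (h3 : ∀ v w : List (Fin n), v.length = w.length →
      (weight μ v < weight μ w ↔
        weightAdd (standardWeightMeasure n) v < weightAdd (standardWeightMeasure n) w)) :
    ∀ w : List (Fin n), ∀ i, 1 ≤ i → i ≤ w.length →
      ∃ a : Fin n, factorWeight μ w i = factorWeight μ w (i - 1) * μ a := by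
  have heq : ∀ v w : List (Fin n), v.length = w.length →
      weightAdd (standardWeightMeasure n) v = weightAdd (standardWeightMeasure n) w →
      weight μ v = weight μ w := by
    intro v w hl hs
    rcases lt_trichotomy (weight μ v) (weight μ w) with h | h | h
    · exact absurd ((h3 v w hl).1 h) (by omega)
    · exact h
    · exact absurd ((h3 w v hl.symm).1 h) (by omega)
  intro w i h1i hiw
  have hiw' : i - 1 ≤ w.length := le_trans (Nat.sub_le i 1) hiw
  obtain ⟨u, hu, hfu, humax⟩ := exists_argmax hμ hiw
  obtain ⟨v, hv, hfv, hvmax⟩ := exists_argmax hμ hiw'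
  have hsmaxu : ∀ u' ∈ facs w i,
      weightAdd (standardWeightMeasure n) u' ≤ weightAdd (standardWeightMeasure n) u := by
    intro u' hu'
    by_contra hlt
    have hw : weight μ u < weight μ u' :=
      (h3 u u' (by rw [length_of_mem_facs hiw hu, length_of_mem_facs hiw hu'])).2 (by omega)
    exact absurd (humax u' hu') (not_le.2 hw)
  have hsmaxv : ∀ v' ∈ facs w (i - 1),
      weightAdd (standardWeightMeasure n) v' ≤ weightAdd (standardWeightMeasure n) v := by
    intro v' hv'
    by_contra hlt
    have hw : weight μ v < weight μ v' :=
      (h3 v v' (by rw [length_of_mem_facs hiw' hv, length_of_mem_facs hiw' hv'])).2 (by omega)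
    exact absurd (hvmax v' hv') (not_le.2 hw)
  -- lower bound
  obtain ⟨v', hv', a0, hcase⟩ := exists_extension h1i hiw hv
  have hsv' : weightAdd (standardWeightMeasure n) v + 1
      ≤ weightAdd (standardWeightMeasure n) v' := by
    rcases hcase with rfl | rfl
    · rw [weightAdd_append]
      simp [weightAdd, standardWeightMeasure]
    · simp [weightAdd, standardWeightMeasure]
  have hlow : weightAdd (standardWeightMeasure n) v + 1
      ≤ weightAdd (standardWeightMeasure n) u := le_trans hsv' (hsmaxu v' hv')
  -- upper bound
  have hune : u ≠ [] := by
    intro h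
    have := length_of_mem_facs hiw hu
    rw [h] at this
    simp at this
    omega
  have hdecomp : u.dropLast ++ [u.getLast hune] = u := List.dropLast_append_getLast hune
  have hdl : u.dropLast = u.take (i - 1) := by
    rw [List.dropLast_eq_take, length_of_mem_facs hiw hu]
  have hdlmem : u.dropLast ∈ facs w (i - 1) := by
    rw [hdl]; exact take_mem_facs h1i hu
  have hsaddu : weightAdd (standardWeightMeasure n) u
      = weightAdd (standardWeightMeasure n) u.dropLast + ((u.getLast hune : ℕ) + 1) := by
    conv_lhs => rw [← hdecomp]
    rw [weightAdd_append]
    simp [weightAdd, standardWeightMeasure]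
  have hupp : weightAdd (standardWeightMeasure n) u
      ≤ weightAdd (standardWeightMeasure n) v + n := by
    have h5 := hsmaxv u.dropLast hdlmem
    have hlast : (u.getLast hune : ℕ) + 1 ≤ n := (u.getLast hune).isLt
    omega
  -- choose the letter
  have htn : 1 ≤ weightAdd (standardWeightMeasure n) u - weightAdd (standardWeightMeasure n) v
      ∧ weightAdd (standardWeightMeasure n) u - weightAdd (standardWeightMeasure n) v ≤ n := by
    omega
  refine ⟨⟨weightAdd (standardWeightMeasure n) u - weightAdd (standardWeightMeasure n) v - 1,
    by omega⟩, ?_⟩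
  set a : Fin n := ⟨weightAdd (standardWeightMeasure n) u
    - weightAdd (standardWeightMeasure n) v - 1, by omega⟩ with ha
  rw [hfu, hfv]
  have hlen : u.length = (v ++ [a]).length := by
    rw [length_of_mem_facs hiw hu]
    simp [length_of_mem_facs hiw' hv]
    omega
  have hsadd : weightAdd (standardWeightMeasure n) u
      = weightAdd (standardWeightMeasure n) (v ++ [a]) := by
    rw [weightAdd_append]
    have hsingle : weightAdd (standardWeightMeasure n) [a] = (a : ℕ) + 1 := by
      simp [weightAdd, standardWeightMeasure]
    have hav : (a : ℕ) = weightAdd (standardWeightMeasure n) u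
        - weightAdd (standardWeightMeasure n) v - 1 := rfl
    rw [hsingle]
    omega
  rw [heq u (v ++ [a]) hlen hsadd, weight_append']
  simp [weight]

end main

/-- For a non-binary, injective, alphabetically ordered weight measure `μ` over the
strictly totally ordered alphabet `Fin n` (`n > 2`), the following are equivalent:
(1) `μ` is gapfree;
(2) `μ` has no gap over any word of the form `c·a·c·b` with `a < b < c`;
(3) `μ` is equivalent to the standard weight measure `μ_Σ`. -/
theorem gapfree_tfae {n : ℕ} (hn : 2 < n) {A : Type*} [DecidableEq A]
    [CommMonoid A] [LinearOrder A] [IsOrderedCancelMonoid A] (μ : Fin n → A) (hμ : ∀ a, 1 < μ a)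
    (hnonbin : 2 < (Finset.univ.image μ).card)
    (hinj : Function.Injective μ) (hmono : Monotone μ) :
    List.TFAE
      [Gapfree μ,
       ∀ a b c : Fin n, a < b → b < c →
         ∀ i, 1 ≤ i → i ≤ 4 →
           ∃ x : Fin n, factorWeight μ [c, a, c, b] i
             = factorWeight μ [c, a, c, b] (i - 1) * μ x,
       ∀ v w : List (Fin n), v.length = w.length →
         (weight μ v < weight μ w ↔
           weightAdd (standardWeightMeasure n) v < weightAdd (standardWeightMeasure n) w)] := by
  have hsm : StrictMono μ := hmono.strictMono_of_injective hinj
  tfae_have 1 → 2 := fun h1 a b c hab hbc i hi1 hi4 =>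
    h1 [c, a, c, b] i hi1 (by simpa using hi4)
  tfae_have 2 → 3 := fun h2 =>
    equiv_standard hsm (key_of_two hsm hμ h2) (by omega)
  tfae_have 3 → 1 := fun h3 => gapfree_of_equiv hμ (by omega) h3
  tfae_finish
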